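/- Assume in addition that L is injective and fix τ > 1, an initial guess φ₀ ∈ X, and an exact solution φ̄ ∈ X. Let δₖ > 0 be a sequence with δₖ → 0, let yₖ ∈ Y satisfy ‖yₖ − L φ̄‖ ≤ δₖ for every k, and let φₖ : [0,∞) → X be differentiable curves with φₖ(0) = φ₀ satisfying the noisy-data flows φₖ'(t) = −L*(L φₖ(t) − yₖ) for all t ≥ 0. If Tₖ := inf{ t ≥ 0 : ‖L φₖ(t) − yₖ‖ ≤ τ δₖ } denote the (finite) discrepancy-principle stopping times, then the approximations φₖ(Tₖ) converge strongly to φ̄ in X as k → ∞. -/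

import Mathlib

open Set NormedSpace

namespace NoisyFlowAux

set_option maxHeartbeats 1000000
set_option synthInstance.maxHeartbeats 1000000

variable {X Y : Type*}
  [NormedAddCommGroup X] [InnerProductSpace ℝ X] [CompleteSpace X]
  [NormedAddCommGroup Y] [InnerProductSpace ℝ Y] [CompleteSpace Y]

local notation "⟪" x ", " y "⟫" => @inner ℝ _ _ x y

lemma normSq_hasDerivAt {u : ℝ → X} {u' : X} {t : ℝ} (h : HasDerivAt u u' t) :
    HasDerivAt (fun s => ‖u s‖ ^ 2) (2 * ⟪u', u t⟫) t := by
  have h2 : HasDerivAt (fun s => ⟪u s, u s⟫) (⟪u t, u'⟫ + ⟪u', u t⟫) t := h.inner ℝ h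
  have e : (fun s => ⟪u s, u s⟫) = fun s => ‖u s‖ ^ 2 :=
    funext fun s => real_inner_self_eq_norm_sq _
  rw [e] at h2
  convert h2 using 1
  rw [real_inner_comm]; ring

lemma antitoneOn_Icc_of_hasDerivAt {f g : ℝ → ℝ} {a b : ℝ}
    (hd : ∀ t ∈ Icc a b, HasDerivAt f (g t) t)
    (h0 : ∀ t ∈ Ioo a b, g t ≤ 0) : AntitoneOn f (Icc a b) := by
  apply antitoneOn_of_deriv_nonpos (convex_Icc a b)
  · exact fun t ht => (hd t ht).continuousAt.continuousWithinAt
  · rw [interior_Icc]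
    exact fun t ht => ((hd t (Ioo_subset_Icc_self ht)).differentiableAt).differentiableWithinAt
  · rw [interior_Icc]
    intro t ht
    rw [(hd t (Ioo_subset_Icc_self ht)).deriv]
    exact h0 t ht

lemma sqrt_le_of_sq_le {a b : ℝ} (ha : 0 ≤ a) (hb : 0 ≤ b) (h : a ^ 2 ≤ b ^ 2) : a ≤ b := by
  have := Real.sqrt_le_sqrt h
  rwa [Real.sqrt_sq ha, Real.sqrt_sq hb] at this

lemma semigroup_hasDerivAt (A : X →L[ℝ] X) (v : X) (t : ℝ) :
    HasDerivAt (fun s => exp (s • (-A)) v) (-(A (exp (t • (-A)) v))) t := by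
  have h := hasDerivAt_exp_smul_const' (𝕂 := ℝ) (-A) t
  have h2 := h.clm_apply (hasDerivAt_const t v)
  simpa using h2

lemma semigroup_comm (A : X →L[ℝ] X) (t : ℝ) (z : X) :
    exp (t • (-A)) (A z) = A (exp (t • (-A)) z) := by
  have c : Commute (t • (-A)) A := ((Commute.refl A).neg_left).smul_left t
  have h := c.exp_left
  calc exp (t • (-A)) (A z) = (exp (t • (-A)) * A) z := rfl
    _ = (A * exp (t • (-A))) z := by rw [h]
    _ = A (exp (t • (-A)) z) := rfl

lemma semigroup_apply_zero (A : X →L[ℝ] X) (v : X) : exp ((0:ℝ) • (-A)) v = v := by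
  simp [exp_zero]

lemma semigroup_cont (A : X →L[ℝ] X) (v : X) :
    Continuous (fun s : ℝ => exp (s • (-A)) v) :=
  continuous_iff_continuousAt.2 fun t => (semigroup_hasDerivAt A v t).continuousAt

section semigroup
variable (L : X →L[ℝ] Y) {A : X →L[ℝ] X}
  (hA : ∀ x z : X, ⟪A x, z⟫ = ⟪L x, L z⟫)

include hA

lemma semigroup_contraction (v : X) {t : ℝ} (ht : 0 ≤ t) :
    ‖exp (t • (-A)) v‖ ≤ ‖v‖ := by
  set u : ℝ → X := fun s => exp (s • (-A)) v with hu
  have hd : ∀ s ∈ Icc (0:ℝ) t,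
      HasDerivAt (fun r => ‖u r‖ ^ 2) (2 * ⟪-(A (u s)), u s⟫) s :=
    fun s _ => normSq_hasDerivAt (semigroup_hasDerivAt A v s)
  have hmono : AntitoneOn (fun r => ‖u r‖ ^ 2) (Icc 0 t) := by
    apply antitoneOn_Icc_of_hasDerivAt hd
    intro s _
    have : ⟪A (u s), u s⟫ = ‖L (u s)‖ ^ 2 := by
      rw [hA]; exact real_inner_self_eq_norm_sq _
    rw [inner_neg_left, this]
    nlinarith [sq_nonneg ‖L (u s)‖]
  have h0 : u 0 = v := semigroup_apply_zero A v
  have h2 : ‖u t‖ ^ 2 ≤ ‖u 0‖ ^ 2 := hmono (left_mem_Icc.2 ht) (right_mem_Icc.2 ht) ht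
  rw [h0] at h2
  exact sqrt_le_of_sq_le (norm_nonneg _) (norm_nonneg _) h2

lemma semigroup_smoothing (v : X) {t : ℝ} (ht : 0 < t) :
    ‖A (exp (t • (-A)) v)‖ ≤ ‖v‖ / t := by
  set u : ℝ → X := fun s => exp (s • (-A)) v with hudef
  set χ : ℝ → ℝ := fun s =>
    ‖u s‖ ^ 2 + 2 * s * ‖L (u s)‖ ^ 2 + 2 * s ^ 2 * ‖A (u s)‖ ^ 2 with hχdef
  have hu : ∀ s, HasDerivAt u (-(A (u s))) s := fun s => semigroup_hasDerivAt A v s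
  have hLu : ∀ s, HasDerivAt (fun r => L (u r)) (L (-(A (u s)))) s :=
    fun s => (L.hasFDerivAt).comp_hasDerivAt s (hu s)
  have hAu : ∀ s, HasDerivAt (fun r => A (u r)) (A (-(A (u s)))) s :=
    fun s => (A.hasFDerivAt).comp_hasDerivAt s (hu s)
  -- the three basic derivative computations
  have hf : ∀ s, HasDerivAt (fun r => ‖u r‖ ^ 2) (-2 * ‖L (u s)‖ ^ 2) s := by
    intro s
    have := normSq_hasDerivAt (hu s)
    convert this using 1
    rw [inner_neg_left, hA, real_inner_self_eq_norm_sq]; ring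
  have hg : ∀ s, HasDerivAt (fun r => ‖L (u r)‖ ^ 2) (-2 * ‖A (u s)‖ ^ 2) s := by
    intro s
    have := normSq_hasDerivAt (hLu s)
    convert this using 1
    have e1 : ⟪L (-(A (u s))), L (u s)⟫ = -⟪L (A (u s)), L (u s)⟫ := by
      rw [map_neg, inner_neg_left]
    have e2 : ⟪L (A (u s)), L (u s)⟫ = ‖A (u s)‖ ^ 2 := by
      rw [real_inner_comm, ← hA]
      exact real_inner_self_eq_norm_sq _
    rw [e1, e2]; ring
  have hh : ∀ s, HasDerivAt (fun r => ‖A (u r)‖ ^ 2) (-2 * ‖L (A (u s))‖ ^ 2) s := by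
    intro s
    have := normSq_hasDerivAt (hAu s)
    convert this using 1
    have e1 : ⟪A (-(A (u s))), A (u s)⟫ = -⟪A (A (u s)), A (u s)⟫ := by
      rw [map_neg, inner_neg_left]
    have e2 : ⟪A (A (u s)), A (u s)⟫ = ‖L (A (u s))‖ ^ 2 := by
      rw [hA]; exact real_inner_self_eq_norm_sq _
    rw [e1, e2]; ring
  have hχ : ∀ s, HasDerivAt χ (-(4 * s ^ 2 * ‖L (A (u s))‖ ^ 2)) s := by
    intro s
    have h1 : HasDerivAt (fun r : ℝ => 2 * r) 2 s := by
      simpa using (hasDerivAt_id s).const_mul (2:ℝ)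
    have h2 : HasDerivAt (fun r : ℝ => 2 * r ^ 2) (2 * (2 * s)) s := by
      simpa using (hasDerivAt_pow 2 s).const_mul (2:ℝ)
    have := ((hf s).add (h1.mul (hg s))).add (h2.mul (hh s))
    refine this.congr_deriv ?_
    ring
  have hmono : AntitoneOn χ (Icc 0 t) := by
    apply antitoneOn_Icc_of_hasDerivAt (fun s _ => hχ s)
    intro s _
    nlinarith [sq_nonneg s, sq_nonneg ‖L (A (u s))‖]
  have hu0 : u 0 = v := semigroup_apply_zero A v
  have hχ0 : χ 0 = ‖v‖ ^ 2 := by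
    simp [hχdef, hu0]
  have hkey : χ t ≤ ‖v‖ ^ 2 := by
    have h2 : χ t ≤ χ 0 := hmono (left_mem_Icc.2 ht.le) (right_mem_Icc.2 ht.le) ht.le
    rwa [hχ0] at h2
  have hbound : 2 * t ^ 2 * ‖A (u t)‖ ^ 2 ≤ ‖v‖ ^ 2 := by
    have h1 : (0:ℝ) ≤ ‖u t‖ ^ 2 := sq_nonneg _
    have h2 : (0:ℝ) ≤ 2 * t * ‖L (u t)‖ ^ 2 := by positivity
    simp only [hχdef] at hkey
    linarith
  rw [le_div_iff₀ ht]
  apply sqrt_le_of_sq_le (by positivity) (norm_nonneg v)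
  have : (‖A (u t)‖ * t) ^ 2 = t ^ 2 * ‖A (u t)‖ ^ 2 := by ring
  rw [this]
  nlinarith [sq_nonneg t, sq_nonneg ‖A (u t)‖]

end semigroup


lemma range_dense (L : X →L[ℝ] Y) (hL : Function.Injective L) (v : X) {ε : ℝ} (hε : 0 < ε) :
    ∃ z : X, ‖v - (L.adjoint.comp L) z‖ < ε := by
  set A := L.adjoint.comp L with hAdef
  have hA : ∀ x z : X, ⟪A x, z⟫ = ⟪L x, L z⟫ := fun x z =>
    ContinuousLinearMap.adjoint_inner_left L z (L x)
  set K : Submodule ℝ X := LinearMap.range (A : X →ₗ[ℝ] X) with hK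
  have horth : Kᗮ = ⊥ := by
    rw [Submodule.eq_bot_iff]
    intro x hx
    have hx0 : ⟪A x, x⟫ = 0 := hx (A x) ⟨x, rfl⟩
    rw [hA, real_inner_self_eq_norm_sq] at hx0
    have hLx : L x = 0 := by
      have := sq_eq_zero_iff.mp hx0
      simpa [norm_eq_zero] using this
    exact hL (by simpa using hLx)
  have hdense : K.topologicalClosure = ⊤ := Submodule.topologicalClosure_eq_top_iff.2 horth
  have hv : v ∈ closure (K : Set X) := by
    have : v ∈ K.topologicalClosure := hdense ▸ Submodule.mem_top
    exact this
  rcases Metric.mem_closure_iff.1 hv ε hε with ⟨w, hwK, hdist⟩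
  rcases hwK with ⟨z, rfl⟩
  exact ⟨z, by rwa [dist_eq_norm] at hdist⟩

lemma semigroup_decay (L : X →L[ℝ] Y) (hL : Function.Injective L) (v : X) {ε : ℝ} (hε : 0 < ε) :
    ∃ T : ℝ, 1 ≤ T ∧ ∀ t, T ≤ t → ‖exp (t • (-(L.adjoint.comp L))) v‖ < ε := by
  set A := L.adjoint.comp L with hAdef
  have hA : ∀ x z : X, ⟪A x, z⟫ = ⟪L x, L z⟫ := fun x z =>
    ContinuousLinearMap.adjoint_inner_left L z (L x)
  obtain ⟨z, hz⟩ := range_dense L hL v (half_pos hε)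
  refine ⟨max 1 (2 * ‖z‖ / ε + 1), le_max_left _ _, fun t ht => ?_⟩
  have ht1 : (1:ℝ) ≤ t := le_trans (le_max_left _ _) ht
  have htpos : (0:ℝ) < t := lt_of_lt_of_le one_pos ht1
  have ht2 : 2 * ‖z‖ / ε + 1 ≤ t := le_trans (le_max_right _ _) ht
  have hsplit : exp (t • (-A)) v
      = exp (t • (-A)) (v - A z) + A (exp (t • (-A)) z) := by
    rw [← semigroup_comm, ← map_add]
    congr 1; abel
  have h1 : ‖exp (t • (-A)) (v - A z)‖ ≤ ‖v - A z‖ :=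
    semigroup_contraction L hA _ htpos.le
  have h2 : ‖A (exp (t • (-A)) z)‖ ≤ ‖z‖ / t := semigroup_smoothing L hA z htpos
  have h3 : ‖z‖ / t < ε / 2 := by
    rw [div_lt_iff₀ htpos]
    have h4 : 2 * ‖z‖ / ε < t := by linarith
    rw [div_lt_iff₀ hε] at h4
    linarith
  calc ‖exp (t • (-A)) v‖
      ≤ ‖exp (t • (-A)) (v - A z)‖ + ‖A (exp (t • (-A)) z)‖ := by
        rw [hsplit]; exact norm_add_le _ _
    _ < ε / 2 + ε / 2 := by
        have := lt_of_le_of_lt h1 hz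
        have := lt_of_le_of_lt h2 h3
        linarith
    _ = ε := by ring

lemma key (L : X →L[ℝ] Y) {τ δ : ℝ} (hτ : 1 < τ) (hδ : 0 < δ) {y : Y} {φbar : X}
    (hn : ‖y - L φbar‖ ≤ δ) (φ : ℝ → X)
    (hflow : ∀ t, 0 ≤ t → HasDerivAt φ (-(L.adjoint (L (φ t) - y))) t) :
    (sInf {t : ℝ | 0 ≤ t ∧ ‖L (φ t) - y‖ ≤ τ * δ}) ∈
      {t : ℝ | 0 ≤ t ∧ ‖L (φ t) - y‖ ≤ τ * δ} ∧
    ∀ s, 0 ≤ s → s ≤ sInf {t : ℝ | 0 ≤ t ∧ ‖L (φ t) - y‖ ≤ τ * δ} →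
      ‖φ (sInf {t : ℝ | 0 ≤ t ∧ ‖L (φ t) - y‖ ≤ τ * δ}) - φbar‖ ≤ ‖φ s - φbar‖ := by
  set S := {t : ℝ | 0 ≤ t ∧ ‖L (φ t) - y‖ ≤ τ * δ} with hS
  set G : ℝ → ℝ := fun s => 2 * ⟪-(L.adjoint (L (φ s) - y)), φ s - φbar⟫ with hG
  have hE : ∀ s, 0 ≤ s → HasDerivAt (fun r => ‖φ r - φbar‖ ^ 2) (G s) s :=
    fun s hs => normSq_hasDerivAt ((hflow s hs).sub_const φbar)
  have hGle : ∀ s, G s ≤ -2 * ‖L (φ s) - y‖ * (‖L (φ s) - y‖ - δ) := by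
    intro s
    have e1 : ⟪-(L.adjoint (L (φ s) - y)), φ s - φbar⟫
        = -⟪L (φ s) - y, L (φ s - φbar)⟫ := by
      rw [inner_neg_left, ContinuousLinearMap.adjoint_inner_left]
    have e2 : L (φ s - φbar) = (L (φ s) - y) + (y - L φbar) := by
      rw [map_sub]; abel
    have e3 : ⟪L (φ s) - y, L (φ s - φbar)⟫
        = ‖L (φ s) - y‖ ^ 2 + ⟪L (φ s) - y, y - L φbar⟫ := by
      rw [e2, inner_add_right, real_inner_self_eq_norm_sq]
    have e4 : |⟪L (φ s) - y, y - L φbar⟫| ≤ ‖L (φ s) - y‖ * δ :=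
      le_trans (abs_real_inner_le_norm _ _)
        (mul_le_mul_of_nonneg_left hn (norm_nonneg _))
    have e5 := (abs_le.1 e4).1
    simp only [hG]
    rw [e1, e3]
    nlinarith [e5]
  have hbdd : BddBelow S := ⟨0, fun t ht => ht.1⟩
  have hne : S.Nonempty := by
    by_contra hcon
    have hgt : ∀ t, 0 ≤ t → τ * δ < ‖L (φ t) - y‖ := by
      intro t ht
      by_contra hle
      push_neg at hle
      exact hcon ⟨t, ht, hle⟩
    set c := 2 * τ * (τ - 1) * δ ^ 2 with hc
    have hcpos : 0 < c := by
      rw [hc]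
      exact mul_pos (mul_pos (mul_pos (by norm_num) (by linarith)) (by linarith))
        (pow_pos hδ 2)
    set M := ‖φ 0 - φbar‖ ^ 2 / c + 1 with hM
    have hMpos : 0 < M := by positivity
    have hd : ∀ t ∈ Icc (0:ℝ) M,
        HasDerivAt (fun r => ‖φ r - φbar‖ ^ 2 + c * r) (G t + c) t := by
      intro t htI
      have := (hE t htI.1).add ((hasDerivAt_id t).const_mul c)
      exact this.congr_deriv (by ring)
    have hmono : AntitoneOn (fun r => ‖φ r - φbar‖ ^ 2 + c * r) (Icc 0 M) := by
      apply antitoneOn_Icc_of_hasDerivAt hd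
      intro t htI
      have h1 := hgt t htI.1.le
      have h2 := hGle t
      have hτδ : 0 < τ * δ := mul_pos (by linarith) hδ
      have hp : 0 < ‖L (φ t) - y‖ + τ * δ - δ := by nlinarith
      have hq2 := mul_pos (sub_pos.2 h1) hp
      simp only [hc]
      nlinarith [h2, hq2]
    have h2 : ‖φ M - φbar‖ ^ 2 + c * M ≤ ‖φ 0 - φbar‖ ^ 2 + c * 0 :=
      hmono (left_mem_Icc.2 hMpos.le) (right_mem_Icc.2 hMpos.le) hMpos.le
    have hcM : c * M = ‖φ 0 - φbar‖ ^ 2 + c := by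
      rw [hM, mul_add, mul_one, mul_div_cancel₀ _ (ne_of_gt hcpos)]
    nlinarith [sq_nonneg ‖φ M - φbar‖]
  have hScl : IsClosed S := by
    have hφc : ContinuousOn φ (Ici (0:ℝ)) :=
      fun t htI => (hflow t htI).continuousAt.continuousWithinAt
    have hfc : ContinuousOn (fun t => ‖L (φ t) - y‖) (Ici (0:ℝ)) :=
      ((L.continuous.comp_continuousOn hφc).sub continuousOn_const).norm
    have hSeq : S = Ici (0:ℝ) ∩ (fun t => ‖L (φ t) - y‖) ⁻¹' (Iic (τ * δ)) := by
      ext t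
      simp [hS, mem_Ici, mem_Iic, mem_setOf_eq]
    rw [hSeq]
    exact hfc.preimage_isClosed_of_isClosed isClosed_Ici isClosed_Iic
  have hmem : sInf S ∈ S := hScl.csInf_mem hne hbdd
  have hT0 : 0 ≤ sInf S := hmem.1
  have hEmono : AntitoneOn (fun r => ‖φ r - φbar‖ ^ 2) (Icc 0 (sInf S)) := by
    apply antitoneOn_Icc_of_hasDerivAt (fun t htI => hE t htI.1)
    intro t htI
    have htS : t ∉ S := notMem_of_lt_csInf htI.2 hbdd
    have hgt : τ * δ < ‖L (φ t) - y‖ := by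
      by_contra hle
      push_neg at hle
      exact htS ⟨htI.1.le, hle⟩
    have h2 := hGle t
    have hτδ : 0 < τ * δ := mul_pos (by linarith) hδ
    have hn1 : 0 < ‖L (φ t) - y‖ := lt_trans hτδ hgt
    have hn2 : 0 < ‖L (φ t) - y‖ - δ := by nlinarith
    nlinarith [h2, mul_pos hn1 hn2]
  refine ⟨hmem, fun s hs0 hsT => ?_⟩
  have h2 : ‖φ (sInf S) - φbar‖ ^ 2 ≤ ‖φ s - φbar‖ ^ 2 :=
    hEmono ⟨hs0, hsT⟩ ⟨hT0, le_refl _⟩ hsT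
  exact sqrt_le_of_sq_le (norm_nonneg _) (norm_nonneg _) h2

lemma diff_bound (L : X →L[ℝ] Y) {δ : ℝ} (hδ : 0 ≤ δ) {y : Y} {φbar φ0 : X}
    (hn : ‖y - L φbar‖ ≤ δ) (φ : ℝ → X) (hinit : φ 0 = φ0)
    (hflow : ∀ t, 0 ≤ t → HasDerivAt φ (-(L.adjoint (L (φ t) - y))) t)
    {t : ℝ} (ht : 0 ≤ t) :
    ‖φ t - (φbar + exp (t • (-(L.adjoint.comp L))) (φ0 - φbar))‖ ^ 2
      ≤ δ ^ 2 / 2 * t := by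
  set A := L.adjoint.comp L with hAdef
  set W : ℝ → X := fun s => exp (s • (-A)) (φ0 - φbar) with hW
  set d : ℝ → X := fun s => φ s - (φbar + W s) with hd
  have hdderiv : ∀ s, 0 ≤ s →
      HasDerivAt d (-(L.adjoint (L (d s) - (y - L φbar)))) s := by
    intro s hs
    have h1 := (hflow s hs).sub
      ((semigroup_hasDerivAt A (φ0 - φbar) s).const_add φbar)
    convert h1 using 1
    show -(L.adjoint (L (φ s - (φbar + W s)) - (y - L φbar)))
        = -(L.adjoint (L (φ s) - y)) - -(A (W s))
    have hAW : A (W s) = L.adjoint (L (W s)) := rfl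
    rw [hAW]
    simp only [map_sub, map_add]
    abel
    rfl
  have hq : ∀ s ∈ Icc (0:ℝ) t,
      HasDerivAt (fun r => ‖d r‖ ^ 2 - δ ^ 2 / 2 * r)
        (2 * ⟪-(L.adjoint (L (d s) - (y - L φbar))), d s⟫ - δ ^ 2 / 2) s := by
    intro s hs
    have := (normSq_hasDerivAt (hdderiv s hs.1)).sub
      ((hasDerivAt_id s).const_mul (δ ^ 2 / 2))
    exact this.congr_deriv (by ring)
  have hbound : ∀ s ∈ Ioo (0:ℝ) t,
      2 * ⟪-(L.adjoint (L (d s) - (y - L φbar))), d s⟫ - δ ^ 2 / 2 ≤ 0 := by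
    intro s _
    have e1 : ⟪-(L.adjoint (L (d s) - (y - L φbar))), d s⟫
        = -⟪L (d s) - (y - L φbar), L (d s)⟫ := by
      rw [inner_neg_left, ContinuousLinearMap.adjoint_inner_left]
    have e2 : ⟪L (d s) - (y - L φbar), L (d s)⟫
        = ‖L (d s)‖ ^ 2 - ⟪y - L φbar, L (d s)⟫ := by
      rw [inner_sub_left, real_inner_self_eq_norm_sq]
    have e3 : |⟪y - L φbar, L (d s)⟫| ≤ δ * ‖L (d s)‖ :=
      le_trans (abs_real_inner_le_norm _ _)
        (mul_le_mul_of_nonneg_right hn (norm_nonneg _))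
    have e4 := (abs_le.1 e3).2
    rw [e1, e2]
    nlinarith [sq_nonneg (2 * ‖L (d s)‖ - δ)]
  have hmono : AntitoneOn (fun r => ‖d r‖ ^ 2 - δ ^ 2 / 2 * r) (Icc 0 t) :=
    antitoneOn_Icc_of_hasDerivAt hq hbound
  have h0 : d 0 = 0 := by
    show φ 0 - (φbar + W 0) = 0
    rw [hinit, show W 0 = φ0 - φbar from semigroup_apply_zero A _]
    abel
  have h2 : ‖d t‖ ^ 2 - δ ^ 2 / 2 * t ≤ ‖d 0‖ ^ 2 - δ ^ 2 / 2 * 0 :=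
    hmono (left_mem_Icc.2 ht) (right_mem_Icc.2 ht) ht
  rw [h0] at h2
  simp only [norm_zero] at h2
  have h3 : ‖d t‖ ^ 2 ≤ δ ^ 2 / 2 * t := by nlinarith
  exact h3

end NoisyFlowAux

/-- Stability: with `L` injective, `τ > 1`, noise levels
`δₖ → 0`, noisy data `yₖ` with `‖yₖ − L φ̄‖ ≤ δₖ`, and flows `φₖ` for the data
`yₖ` all starting at `φ₀`, the approximations `φₖ(Tₖ)` at the (finite)
discrepancy-principle stopping times `Tₖ = inf{t ≥ 0 : ‖L φₖ(t) − yₖ‖ ≤ τ δₖ}`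
converge strongly to `φ̄`. -/
theorem noisy_flow_stability
    {X Y : Type*}
    [NormedAddCommGroup X] [InnerProductSpace ℝ X] [CompleteSpace X]
    [NormedAddCommGroup Y] [InnerProductSpace ℝ Y] [CompleteSpace Y]
    (L : X →L[ℝ] Y) (hL : Function.Injective L)
    (τ : ℝ) (hτ : 1 < τ) (φ0 φbar : X)
    (δ : ℕ → ℝ) (hδpos : ∀ k, 0 < δ k)
    (hδ0 : Filter.Tendsto δ Filter.atTop (nhds 0))
    (y : ℕ → Y) (hnoise : ∀ k, ‖y k - L φbar‖ ≤ δ k)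
    (φ : ℕ → ℝ → X) (hinit : ∀ k, φ k 0 = φ0)
    (hflow : ∀ k, ∀ t : ℝ, 0 ≤ t →
      HasDerivAt (φ k) (-(L.adjoint (L (φ k t) - y k))) t) :
    Filter.Tendsto
      (fun k => φ k (sInf {t : ℝ | 0 ≤ t ∧ ‖L (φ k t) - y k‖ ≤ τ * δ k}))
      Filter.atTop (nhds φbar) := by
  classical
  open NoisyFlowAux Set Filter NormedSpace in
  rw [Metric.tendsto_nhds]
  intro ε hε
  have hε4 : 0 < ε / 4 := by linarith
  obtain ⟨T0, hT01, hT0⟩ := NoisyFlowAux.semigroup_decay L hL (φ0 - φbar) hε4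
  set W : ℝ → X := fun t => NormedSpace.exp (t • (-(L.adjoint.comp L))) (φ0 - φbar)
    with hW
  have hT0' : ∀ t, T0 ≤ t → ‖W t‖ < ε / 4 := hT0
  have hWcont : Continuous W := NoisyFlowAux.semigroup_cont (L.adjoint.comp L) (φ0 - φbar)
  have hT00 : (0:ℝ) ≤ T0 := by linarith
  -- a compactness constant for the injectivity argument on `[0, T0]`
  obtain ⟨c, hcpos, hc⟩ :
      ∃ c, 0 < c ∧ ∀ t ∈ Set.Icc (0:ℝ) T0, ‖L (W t)‖ < c → ‖W t‖ < ε / 4 := by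
    set S' := Set.Icc (0:ℝ) T0 ∩ (fun t => ‖W t‖) ⁻¹' (Set.Ici (ε/4)) with hS'
    have hS'comp : IsCompact S' :=
      (isCompact_Icc).inter_right (isClosed_Ici.preimage hWcont.norm)
    rcases S'.eq_empty_or_nonempty with hemp | hSne
    · refine ⟨1, one_pos, fun t htI _ => ?_⟩
      by_contra hge
      push_neg at hge
      have : t ∈ S' := ⟨htI, hge⟩
      rw [hemp] at this
      exact this
    · obtain ⟨t0, ht0S, hmin⟩ := hS'comp.exists_isMinOn hSne
        ((L.continuous.comp hWcont).norm.continuousOn)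
      refine ⟨‖L (W t0)‖, ?_, ?_⟩
      · rw [norm_pos_iff]
        intro hzero
        have hW0 : W t0 = 0 := hL (by simpa using hzero)
        have hge := ht0S.2
        rw [Set.mem_preimage, hW0, norm_zero] at hge
        have : (0:ℝ) < ε / 4 := hε4
        exact absurd hge (by simpa using not_le.2 this)
      · intro t htI hlt
        by_contra hge
        push_neg at hge
        have htS' : t ∈ S' := ⟨htI, hge⟩
        exact absurd (hmin htS') (not_le.2 hlt)
  -- eventual smallness of the noise-dependent quantities
  have hsq : Filter.Tendsto (fun k => δ k * Real.sqrt (T0 / 2))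
      Filter.atTop (nhds 0) := by
    simpa using hδ0.mul_const (Real.sqrt (T0 / 2))
  have h1 : ∀ᶠ k in Filter.atTop, δ k * Real.sqrt (T0 / 2) < ε / 4 :=
    hsq.eventually_lt_const hε4
  have h2 : ∀ᶠ k in Filter.atTop,
      ‖L‖ * (δ k * Real.sqrt (T0 / 2)) + (τ + 1) * δ k < c := by
    have htend : Filter.Tendsto
        (fun k => ‖L‖ * (δ k * Real.sqrt (T0 / 2)) + (τ + 1) * δ k)
        Filter.atTop (nhds 0) := by
      have := (hsq.const_mul ‖L‖).add (hδ0.const_mul (τ + 1))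
      simpa using this
    exact htend.eventually_lt_const hcpos
  filter_upwards [h1, h2] with k hk1 hk2
  obtain ⟨hmem, hmono⟩ :=
    NoisyFlowAux.key L hτ (hδpos k) (hnoise k) (φ k) (hflow k)
  set T := sInf {t : ℝ | 0 ≤ t ∧ ‖L (φ k t) - y k‖ ≤ τ * δ k} with hT
  have hT0k : 0 ≤ T := hmem.1
  have hdisc : ‖L (φ k T) - y k‖ ≤ τ * δ k := hmem.2
  have hdb : ∀ t, 0 ≤ t → ‖φ k t - (φbar + W t)‖ ≤ δ k * Real.sqrt (t / 2) := by
    intro t ht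
    have hdb2 := NoisyFlowAux.diff_bound L (hδpos k).le (hnoise k) (φ k)
      (hinit k) (hflow k) ht
    have heq : (δ k * Real.sqrt (t / 2)) ^ 2 = δ k ^ 2 / 2 * t := by
      rw [mul_pow, Real.sq_sqrt (by linarith : (0:ℝ) ≤ t / 2)]
      ring
    apply NoisyFlowAux.sqrt_le_of_sq_le (norm_nonneg _)
      (mul_nonneg (hδpos k).le (Real.sqrt_nonneg _))
    rw [heq]
    exact hdb2
  rw [dist_eq_norm]
  rcases le_or_gt T0 T with hcase | hcase
  · -- the stopping time is at least `T0`
    have hm := hmono T0 hT00 hcase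
    have htri : ‖φ k T0 - φbar‖ ≤ ‖φ k T0 - (φbar + W T0)‖ + ‖W T0‖ := by
      have hsp : φ k T0 - φbar = (φ k T0 - (φbar + W T0)) + W T0 := by abel
      rw [hsp]; exact norm_add_le _ _
    have hWT0 : ‖W T0‖ < ε / 4 := hT0' T0 (le_refl T0)
    have hdT0 := hdb T0 hT00
    calc ‖φ k T - φbar‖ ≤ ‖φ k T0 - φbar‖ := hm
      _ ≤ ‖φ k T0 - (φbar + W T0)‖ + ‖W T0‖ := htri
      _ < ε / 4 + ε / 4 := by linarith
      _ < ε := by linarith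
  · -- the stopping time is before `T0`
    have hdT := hdb T hT0k
    have hsqle : Real.sqrt (T / 2) ≤ Real.sqrt (T0 / 2) :=
      Real.sqrt_le_sqrt (by linarith)
    have hdT' : ‖φ k T - (φbar + W T)‖ ≤ δ k * Real.sqrt (T0 / 2) :=
      le_trans hdT (mul_le_mul_of_nonneg_left hsqle (hδpos k).le)
    have hLWT : ‖L (W T)‖ < c := by
      have hsplit : L (W T)
          = L ((φbar + W T) - φ k T) + (L (φ k T) - y k) + (y k - L φbar) := by
        simp only [map_sub, map_add]
        abel
      have hb1 : ‖L ((φbar + W T) - φ k T)‖ ≤ ‖L‖ * ‖(φbar + W T) - φ k T‖ :=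
        L.le_opNorm _
      have hb1' : ‖(φbar + W T) - φ k T‖ = ‖φ k T - (φbar + W T)‖ := by
        rw [← norm_neg]; congr 1; abel
      rw [hb1'] at hb1
      have hA1 : ‖L ((φbar + W T) - φ k T)‖ ≤ ‖L‖ * (δ k * Real.sqrt (T0 / 2)) :=
        le_trans hb1 (mul_le_mul_of_nonneg_left hdT' (norm_nonneg _))
      calc ‖L (W T)‖
          ≤ ‖L ((φbar + W T) - φ k T)‖ + ‖L (φ k T) - y k‖ + ‖y k - L φbar‖ := by
            rw [hsplit]; exact norm_add₃_le
        _ ≤ ‖L‖ * (δ k * Real.sqrt (T0 / 2)) + (τ + 1) * δ k := by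
            have := hnoise k
            linarith
        _ < c := hk2
    have hWT : ‖W T‖ < ε / 4 := hc T ⟨hT0k, hcase.le⟩ hLWT
    have htri : ‖φ k T - φbar‖ ≤ ‖φ k T - (φbar + W T)‖ + ‖W T‖ := by
      have hsp : φ k T - φbar = (φ k T - (φbar + W T)) + W T := by abel
      rw [hsp]; exact norm_add_le _ _
    calc ‖φ k T - φbar‖ ≤ ‖φ k T - (φbar + W T)‖ + ‖W T‖ := htri
      _ < ε / 4 + ε / 4 := by linarith
      _ < ε := by linarith
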